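/- In a non-symmetric unital operad O, the circle product f ∘ g := Σ_{i=1}^{n} (-1)^{(i-1)(m-1)} f ∘_i g (for f ∈ O^n, g ∈ O^m) satisfies the graded right pre-Lie identity: (f ∘ g) ∘ h − f ∘ (g ∘ h) = (-1)^{(m-1)(p-1)} ((f ∘ h) ∘ g − f ∘ (h ∘ g)) for f ∈ O^n, g ∈ O^m, h ∈ O^p. -/

import Mathlib

open Finset

/-- A non-symmetric unital operad in `k`-modules, presented with an ambient module `A`
whose graded pieces `piece n` play the role of `O^n`, partial compositions
`comp f g i` (denoted `f ∘ᵢ g`, declared to vanish for out-of-range data), and a unit. -/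
structure NSOperad (k A : Type) [CommRing k] [AddCommGroup A] [Module k A] where
  piece : ℕ → Submodule k A
  comp : A → A → ℕ → A
  one : A
  one_mem : one ∈ piece 1
  comp_mem : ∀ {n m : ℕ} {f g : A}, f ∈ piece n → g ∈ piece m → ∀ i : ℕ,
      comp f g i ∈ piece (n + m - 1)
  comp_add_left : ∀ (f f' g : A) (i : ℕ), comp (f + f') g i = comp f g i + comp f' g i
  comp_add_right : ∀ (f g g' : A) (i : ℕ), comp f (g + g') i = comp f g i + comp f g' i
  comp_smul_left : ∀ (c : k) (f g : A) (i : ℕ), comp (c • f) g i = c • comp f g i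
  comp_smul_right : ∀ (c : k) (f g : A) (i : ℕ), comp f (c • g) i = c • comp f g i
  comp_out_of_range : ∀ {n : ℕ} {f : A}, f ∈ piece n → ∀ (g : A) (i : ℕ),
      (n < i ∨ n = 0) → comp f g i = 0
  assoc₁ : ∀ {n m p : ℕ} {f g h : A}, f ∈ piece n → g ∈ piece m → h ∈ piece p →
      ∀ i j : ℕ, 1 ≤ j → j < i → i ≤ n →
      comp (comp f g i) h j = comp (comp f h j) g (i + p - 1)
  assoc₂ : ∀ {n m p : ℕ} {f g h : A}, f ∈ piece n → g ∈ piece m → h ∈ piece p →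
      ∀ i j : ℕ, 1 ≤ i → i ≤ j → j < m + i →
      comp (comp f g i) h j = comp f (comp g h (j - i + 1)) i
  assoc₃ : ∀ {n m p : ℕ} {f g h : A}, f ∈ piece n → g ∈ piece m → h ∈ piece p →
      ∀ i j : ℕ, 1 ≤ i → m + i ≤ j → j ≤ n + m - 1 →
      comp (comp f g i) h j = comp (comp f h (j - m + 1)) g i
  unit_right : ∀ {n : ℕ} {f : A}, f ∈ piece n → ∀ i : ℕ, 1 ≤ i → i ≤ n → comp f one i = f
  unit_left : ∀ f : A, comp one f 1 = f

variable {k A : Type} [CommRing k] [AddCommGroup A] [Module k A]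

/-- The circle product `f ∘ g = ∑_{i=1}^n (-1)^{(i-1)(m-1)} f ∘ᵢ g` for `f ∈ O^n`, `g ∈ O^m`.
(The sign exponent `(i+1)*(m+1)` has the same parity as `(i-1)(m-1)`.) -/
def NSOperad.circle (O : NSOperad k A) (n m : ℕ) (f g : A) : A :=
  ∑ i ∈ Finset.Icc 1 n, ((-1 : ℤ) ^ ((i + 1) * (m + 1))) • O.comp f g i

namespace NSOperadAux

/-- composition with a fixed right argument, as an additive hom -/
def cR (O : NSOperad k A) (y : A) (j : ℕ) : A →+ A :=
  AddMonoidHom.mk' (fun f => O.comp f y j) (fun a b => O.comp_add_left a b y j)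

/-- composition with a fixed left argument, as an additive hom -/
def cL (O : NSOperad k A) (x : A) (j : ℕ) : A →+ A :=
  AddMonoidHom.mk' (fun g => O.comp x g j) (fun a b => O.comp_add_right x a b j)

lemma comp_zsum_left (O : NSOperad k A) {ι : Type} (S : Finset ι) (c : ι → ℤ)
    (F : ι → A) (y : A) (j : ℕ) :
    O.comp (∑ i ∈ S, c i • F i) y j = ∑ i ∈ S, c i • O.comp (F i) y j := by
  have h0 : O.comp (∑ i ∈ S, c i • F i) y j = (cR O y j) (∑ i ∈ S, c i • F i) := rfl
  rw [h0, map_sum]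
  exact Finset.sum_congr rfl fun i _ => by rw [map_zsmul]; rfl

lemma comp_zsum_right (O : NSOperad k A) {ι : Type} (S : Finset ι) (c : ι → ℤ)
    (F : ι → A) (x : A) (j : ℕ) :
    O.comp x (∑ i ∈ S, c i • F i) j = ∑ i ∈ S, c i • O.comp x (F i) j := by
  have h0 : O.comp x (∑ i ∈ S, c i • F i) j = (cL O x j) (∑ i ∈ S, c i • F i) := rfl
  rw [h0, map_sum]
  exact Finset.sum_congr rfl fun i _ => by rw [map_zsmul]; rfl

lemma npow_congr {a b : ℕ} (h : (a : ZMod 2) = (b : ZMod 2)) :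
    (-1 : ℤ) ^ a = (-1 : ℤ) ^ b := by
  have h' : a % 2 = b % 2 := (ZMod.natCast_eq_natCast_iff' a b 2).mp h
  conv_lhs => rw [← Nat.div_add_mod a 2]
  conv_rhs => rw [← Nat.div_add_mod b 2]
  rw [pow_add, pow_add, pow_mul, pow_mul, neg_one_sq, one_pow, one_pow, h']

lemma sum_split3 {α M : Type} [AddCommMonoid M] (s : Finset α) (P Q : α → Prop)
    [DecidablePred P] [DecidablePred Q] (F : α → M) :
    ∑ a ∈ s, F a
      = ∑ a ∈ s.filter (fun x => P x), F a
        + ∑ a ∈ s.filter (fun x => ¬ P x ∧ Q x), F a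
        + ∑ a ∈ s.filter (fun x => ¬ P x ∧ ¬ Q x), F a := by
  rw [add_assoc, ← Finset.filter_filter (fun x => ¬ P x) Q,
    ← Finset.filter_filter (fun x => ¬ P x) (fun x => ¬ Q x),
    Finset.sum_filter_add_sum_filter_not (s.filter (fun x => ¬ P x)) Q,
    Finset.sum_filter_add_sum_filter_not s P]

/-- Middle region of `(f ∘ g) ∘ h` equals `f ∘ (g ∘ h)` expanded. -/
lemma mid (O : NSOperad k A) {n m p : ℕ} {f g h : A}
    (hf : f ∈ O.piece n) (hg : g ∈ O.piece m) (hh : h ∈ O.piece p) :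
    ∑ q ∈ ((Finset.Icc 1 (n + m - 1)) ×ˢ (Finset.Icc 1 n)).filter
        (fun q => ¬ q.1 < q.2 ∧ q.1 < m + q.2),
      ((-1 : ℤ) ^ ((q.1 + 1) * (p + 1) + (q.2 + 1) * (m + 1))) • O.comp (O.comp f g q.2) h q.1
    = ∑ q ∈ (Finset.Icc 1 n) ×ˢ (Finset.Icc 1 m),
      ((-1 : ℤ) ^ ((q.1 + 1) * ((m + p - 1) + 1) + (q.2 + 1) * (p + 1))) •
        O.comp f (O.comp g h q.2) q.1 := by
  refine Finset.sum_nbij' (fun q => (q.2, q.1 + 1 - q.2)) (fun q => (q.1 + q.2 - 1, q.1))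
    ?_ ?_ ?_ ?_ ?_
  · rintro ⟨j, i⟩ hq
    dsimp only
    simp only [Finset.mem_filter, Finset.mem_product, Finset.mem_Icc] at hq ⊢
    omega
  · rintro ⟨i, l⟩ hq
    dsimp only
    simp only [Finset.mem_filter, Finset.mem_product, Finset.mem_Icc] at hq ⊢
    omega
  · rintro ⟨j, i⟩ hq
    dsimp only
    simp only [Finset.mem_filter, Finset.mem_product, Finset.mem_Icc] at hq
    simp only [Prod.mk.injEq, and_true, true_and]
    omega
  · rintro ⟨i, l⟩ hq
    dsimp only
    simp only [Finset.mem_filter, Finset.mem_product, Finset.mem_Icc] at hq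
    simp only [Prod.mk.injEq, and_true, true_and]
    omega
  · rintro ⟨j, i⟩ hq
    dsimp only
    simp only [Finset.mem_filter, Finset.mem_product, Finset.mem_Icc] at hq
    obtain ⟨⟨⟨hj1, hj2⟩, hi1, hi2⟩, hij, hjm⟩ := hq
    have ha := O.assoc₂ hf hg hh i j hi1 (by omega) hjm
    have hm1 : 1 ≤ m := by omega
    obtain ⟨d, rfl⟩ : ∃ d, j = i + d := ⟨j - i, by omega⟩
    have e1 : i + d - i + 1 = d + 1 := by omega
    have e2 : i + d + 1 - i = d + 1 := by omega
    have hmp : m + p - 1 + 1 = m + p := by omega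
    rw [ha, e1, e2, hmp]
    have hsgn : (-1 : ℤ) ^ ((i + d + 1) * (p + 1) + (i + 1) * (m + 1))
        = (-1 : ℤ) ^ ((i + 1) * (m + p) + (d + 1 + 1) * (p + 1)) := by
      apply npow_congr
      push_cast
      have key : ∀ a b c e : ZMod 2,
          (a + b + 1) * (e + 1) + (a + 1) * (c + 1)
            = (a + 1) * (c + e) + (b + 1 + 1) * (e + 1) := by decide
      exact key _ _ _ _
    rw [hsgn]

/-- Cross lemma: the `j < i` region of `(f ∘ g) ∘ h` equals
`(-1)^{(m-1)(p-1)}` times the `j ≥ p+i` region of `(f ∘ h) ∘ g`. -/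
lemma cross (O : NSOperad k A) {n m p : ℕ} {f g h : A}
    (hf : f ∈ O.piece n) (hg : g ∈ O.piece m) (hh : h ∈ O.piece p) :
    ∑ q ∈ ((Finset.Icc 1 (n + m - 1)) ×ˢ (Finset.Icc 1 n)).filter (fun q => q.1 < q.2),
      ((-1 : ℤ) ^ ((q.1 + 1) * (p + 1) + (q.2 + 1) * (m + 1))) • O.comp (O.comp f g q.2) h q.1
    = ((-1 : ℤ) ^ ((m + 1) * (p + 1))) •
      ∑ q ∈ ((Finset.Icc 1 (n + p - 1)) ×ˢ (Finset.Icc 1 n)).filter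
          (fun q => ¬ q.1 < q.2 ∧ ¬ q.1 < p + q.2),
        ((-1 : ℤ) ^ ((q.1 + 1) * (m + 1) + (q.2 + 1) * (p + 1))) •
          O.comp (O.comp f h q.2) g q.1 := by
  rw [Finset.smul_sum]
  refine Finset.sum_nbij' (fun q => (q.2 + p - 1, q.1)) (fun q => (q.2, q.1 + 1 - p))
    ?_ ?_ ?_ ?_ ?_
  · rintro ⟨j, i⟩ hq
    dsimp only
    simp only [Finset.mem_filter, Finset.mem_product, Finset.mem_Icc] at hq ⊢
    omega
  · rintro ⟨b, a⟩ hq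
    dsimp only
    simp only [Finset.mem_filter, Finset.mem_product, Finset.mem_Icc] at hq ⊢
    omega
  · rintro ⟨j, i⟩ hq
    dsimp only
    simp only [Finset.mem_filter, Finset.mem_product, Finset.mem_Icc] at hq
    simp only [Prod.mk.injEq, and_true, true_and]
    omega
  · rintro ⟨b, a⟩ hq
    dsimp only
    simp only [Finset.mem_filter, Finset.mem_product, Finset.mem_Icc] at hq
    simp only [Prod.mk.injEq, and_true, true_and]
    omega
  · rintro ⟨j, i⟩ hq
    dsimp only
    simp only [Finset.mem_filter, Finset.mem_product, Finset.mem_Icc] at hq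
    obtain ⟨⟨⟨hj1, hj2⟩, hi1, hi2⟩, hij⟩ := hq
    have ha := O.assoc₁ hf hg hh i j hj1 hij hi2
    have e1 : i + p - 1 + 1 = i + p := by omega
    rw [ha, smul_smul, ← pow_add, e1]
    have hsgn : (-1 : ℤ) ^ ((j + 1) * (p + 1) + (i + 1) * (m + 1))
        = (-1 : ℤ) ^ ((m + 1) * (p + 1) + ((i + p) * (m + 1) + (j + 1) * (p + 1))) := by
      apply npow_congr
      push_cast
      have key : ∀ a b c e : ZMod 2,
          (a + 1) * (e + 1) + (b + 1) * (c + 1)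
            = (c + 1) * (e + 1) + ((b + e) * (c + 1) + (a + 1) * (e + 1)) := by decide
      exact key _ _ _ _
    rw [hsgn]

end NSOperadAux

/-- the circle product on a non-symmetric unital operad satisfies the
graded (right) pre-Lie identity. -/
theorem circle_preLie (O : NSOperad k A) {n m p : ℕ} {f g h : A}
    (hf : f ∈ O.piece n) (hg : g ∈ O.piece m) (hh : h ∈ O.piece p) :
    O.circle (n + m - 1) p (O.circle n m f g) h - O.circle n (m + p - 1) f (O.circle m p g h)
      = ((-1 : ℤ) ^ ((m + 1) * (p + 1))) •
        (O.circle (n + p - 1) m (O.circle n p f h) g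
          - O.circle n (p + m - 1) f (O.circle p m h g)) := by
  classical
  have e1 : O.circle (n + m - 1) p (O.circle n m f g) h
      = ∑ q ∈ (Finset.Icc 1 (n + m - 1)) ×ˢ (Finset.Icc 1 n),
          ((-1 : ℤ) ^ ((q.1 + 1) * (p + 1) + (q.2 + 1) * (m + 1))) •
            O.comp (O.comp f g q.2) h q.1 := by
    simp only [NSOperad.circle]
    rw [Finset.sum_product]
    refine Finset.sum_congr rfl fun j _ => ?_
    rw [NSOperadAux.comp_zsum_left, Finset.smul_sum]
    refine Finset.sum_congr rfl fun i _ => ?_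
    rw [smul_smul, ← pow_add]
  have e2 : O.circle n (m + p - 1) f (O.circle m p g h)
      = ∑ q ∈ (Finset.Icc 1 n) ×ˢ (Finset.Icc 1 m),
          ((-1 : ℤ) ^ ((q.1 + 1) * ((m + p - 1) + 1) + (q.2 + 1) * (p + 1))) •
            O.comp f (O.comp g h q.2) q.1 := by
    simp only [NSOperad.circle]
    rw [Finset.sum_product]
    refine Finset.sum_congr rfl fun j _ => ?_
    rw [NSOperadAux.comp_zsum_right, Finset.smul_sum]
    refine Finset.sum_congr rfl fun i _ => ?_
    rw [smul_smul, ← pow_add]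
  have e1' : O.circle (n + p - 1) m (O.circle n p f h) g
      = ∑ q ∈ (Finset.Icc 1 (n + p - 1)) ×ˢ (Finset.Icc 1 n),
          ((-1 : ℤ) ^ ((q.1 + 1) * (m + 1) + (q.2 + 1) * (p + 1))) •
            O.comp (O.comp f h q.2) g q.1 := by
    simp only [NSOperad.circle]
    rw [Finset.sum_product]
    refine Finset.sum_congr rfl fun j _ => ?_
    rw [NSOperadAux.comp_zsum_left, Finset.smul_sum]
    refine Finset.sum_congr rfl fun i _ => ?_
    rw [smul_smul, ← pow_add]
  have e2' : O.circle n (p + m - 1) f (O.circle p m h g)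
      = ∑ q ∈ (Finset.Icc 1 n) ×ˢ (Finset.Icc 1 p),
          ((-1 : ℤ) ^ ((q.1 + 1) * ((p + m - 1) + 1) + (q.2 + 1) * (m + 1))) •
            O.comp f (O.comp h g q.2) q.1 := by
    simp only [NSOperad.circle]
    rw [Finset.sum_product]
    refine Finset.sum_congr rfl fun j _ => ?_
    rw [NSOperadAux.comp_zsum_right, Finset.smul_sum]
    refine Finset.sum_congr rfl fun i _ => ?_
    rw [smul_smul, ← pow_add]
  rw [e1, e2, e1', e2']
  have split1 : ∑ q ∈ (Finset.Icc 1 (n + m - 1)) ×ˢ (Finset.Icc 1 n),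
        ((-1 : ℤ) ^ ((q.1 + 1) * (p + 1) + (q.2 + 1) * (m + 1))) •
          O.comp (O.comp f g q.2) h q.1
      = (∑ q ∈ ((Finset.Icc 1 (n + m - 1)) ×ˢ (Finset.Icc 1 n)).filter
            (fun q => q.1 < q.2),
          ((-1 : ℤ) ^ ((q.1 + 1) * (p + 1) + (q.2 + 1) * (m + 1))) •
            O.comp (O.comp f g q.2) h q.1)
        + (∑ q ∈ ((Finset.Icc 1 (n + m - 1)) ×ˢ (Finset.Icc 1 n)).filter
            (fun q => ¬ q.1 < q.2 ∧ q.1 < m + q.2),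
          ((-1 : ℤ) ^ ((q.1 + 1) * (p + 1) + (q.2 + 1) * (m + 1))) •
            O.comp (O.comp f g q.2) h q.1)
        + (∑ q ∈ ((Finset.Icc 1 (n + m - 1)) ×ˢ (Finset.Icc 1 n)).filter
            (fun q => ¬ q.1 < q.2 ∧ ¬ q.1 < m + q.2),
          ((-1 : ℤ) ^ ((q.1 + 1) * (p + 1) + (q.2 + 1) * (m + 1))) •
            O.comp (O.comp f g q.2) h q.1) :=
    NSOperadAux.sum_split3 _ _ _ _
  have split2 : ∑ q ∈ (Finset.Icc 1 (n + p - 1)) ×ˢ (Finset.Icc 1 n),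
        ((-1 : ℤ) ^ ((q.1 + 1) * (m + 1) + (q.2 + 1) * (p + 1))) •
          O.comp (O.comp f h q.2) g q.1
      = (∑ q ∈ ((Finset.Icc 1 (n + p - 1)) ×ˢ (Finset.Icc 1 n)).filter
            (fun q => q.1 < q.2),
          ((-1 : ℤ) ^ ((q.1 + 1) * (m + 1) + (q.2 + 1) * (p + 1))) •
            O.comp (O.comp f h q.2) g q.1)
        + (∑ q ∈ ((Finset.Icc 1 (n + p - 1)) ×ˢ (Finset.Icc 1 n)).filter
            (fun q => ¬ q.1 < q.2 ∧ q.1 < p + q.2),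
          ((-1 : ℤ) ^ ((q.1 + 1) * (m + 1) + (q.2 + 1) * (p + 1))) •
            O.comp (O.comp f h q.2) g q.1)
        + (∑ q ∈ ((Finset.Icc 1 (n + p - 1)) ×ˢ (Finset.Icc 1 n)).filter
            (fun q => ¬ q.1 < q.2 ∧ ¬ q.1 < p + q.2),
          ((-1 : ℤ) ^ ((q.1 + 1) * (m + 1) + (q.2 + 1) * (p + 1))) •
            O.comp (O.comp f h q.2) g q.1) :=
    NSOperadAux.sum_split3 _ _ _ _
  rw [split1, split2]
  rw [NSOperadAux.mid O hf hg hh, NSOperadAux.mid O hf hh hg]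
  have hSC : (∑ q ∈ ((Finset.Icc 1 (n + m - 1)) ×ˢ (Finset.Icc 1 n)).filter
            (fun q => ¬ q.1 < q.2 ∧ ¬ q.1 < m + q.2),
          ((-1 : ℤ) ^ ((q.1 + 1) * (p + 1) + (q.2 + 1) * (m + 1))) •
            O.comp (O.comp f g q.2) h q.1)
      = ((-1 : ℤ) ^ ((m + 1) * (p + 1))) •
          ∑ q ∈ ((Finset.Icc 1 (n + p - 1)) ×ˢ (Finset.Icc 1 n)).filter
              (fun q => q.1 < q.2),
            ((-1 : ℤ) ^ ((q.1 + 1) * (m + 1) + (q.2 + 1) * (p + 1))) •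
              O.comp (O.comp f h q.2) g q.1 := by
    rw [NSOperadAux.cross O hf hh hg, smul_smul, ← pow_add]
    have hev : (-1 : ℤ) ^ ((m + 1) * (p + 1) + (p + 1) * (m + 1)) = 1 :=
      Even.neg_one_pow ⟨(m + 1) * (p + 1), by ring⟩
    rw [hev, one_smul]
  rw [NSOperadAux.cross O hf hg hh, hSC]
  rw [smul_sub, smul_add, smul_add]
  abel
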